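/- arXiv:2103.07827 — 2 statements merged into one kernel-verified Lean document; each statement's English description precedes it below -/
import Mathlib

section
/- Gentle Measurement identity: if ρ is a density matrix and A is an orthogonal projector with tr(ρA) > 0, then F(ρ, ρ|A) = tr(ρA), where ρ|A = AρA / tr(ρA). -/
open Matrix ComplexOrder

/-- The positive semidefinite square root of a positive semidefinite matrix, with the
definition `Matrix.PosSemidef.sqrt` had in Mathlib (Dec 2024); it has since been removed. -/
noncomputable def Matrix.PosSemidef.sqrt {n 𝕜 : Type*} [Fintype n] [RCLike 𝕜] [DecidableEq n]
    {A : Matrix n n 𝕜} (hA : A.PosSemidef) : Matrix n n 𝕜 :=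
  hA.1.eigenvectorUnitary.1 * diagonal ((↑) ∘ (√·) ∘ hA.1.eigenvalues) *
  (star hA.1.eigenvectorUnitary : Matrix n n 𝕜)

/-- The Schatten 1-norm (trace norm): ‖M‖₁ = tr √(MᴴM). -/
noncomputable def traceNorm {n m : Type*} [Fintype n] [Fintype m] [DecidableEq m]
    (M : Matrix n m ℂ) : ℝ :=
  ((Matrix.posSemidef_conjTranspose_mul_self M).sqrt.trace).re

private lemma psd_smul_aux {d : ℕ} {M : Matrix (Fin d) (Fin d) ℂ} (hM : M.PosSemidef)
    {c : ℝ} (hc : 0 ≤ c) : ((c : ℂ) • M).PosSemidef := by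
  constructor
  · unfold Matrix.IsHermitian
    rw [conjTranspose_smul, hM.1]
    simp
  · intro x
    have := hM.2 x
    exact (hM.smul (a := (c : ℂ)) (by exact_mod_cast hc)).2 x

open scoped MatrixOrder in
lemma Matrix.PosSemidef.sqrt_eq_cfcSqrt {n 𝕜 : Type*} [Fintype n] [RCLike 𝕜] [DecidableEq n]
    {A : Matrix n n 𝕜} (hA : A.PosSemidef) : hA.sqrt = CFC.sqrt A := by
  rw [CFC.sqrt_eq_cfc, cfc_nnreal_eq_real _ A, hA.1.cfc_eq]
  simp only [IsHermitian.cfc, Matrix.PosSemidef.sqrt, Unitary.conjStarAlgAut_apply]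
  have h : (RCLike.ofReal ∘ (fun x => √x) ∘ hA.1.eigenvalues : n → 𝕜) =
      RCLike.ofReal ∘ (fun x => ((NNReal.sqrt x.toNNReal : NNReal) : ℝ)) ∘ hA.1.eigenvalues := by
    funext i
    simp [max_eq_left (hA.eigenvalues_nonneg i)]
  rw [h]

open scoped MatrixOrder in
lemma Matrix.PosSemidef.posSemidef_sqrt {n 𝕜 : Type*} [Fintype n] [RCLike 𝕜] [DecidableEq n]
    {A : Matrix n n 𝕜} (hA : A.PosSemidef) : hA.sqrt.PosSemidef := by
  rw [hA.sqrt_eq_cfcSqrt]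
  exact nonneg_iff_posSemidef.mp (CFC.sqrt_nonneg A)

open scoped MatrixOrder in
lemma Matrix.PosSemidef.sqrt_mul_self {n 𝕜 : Type*} [Fintype n] [RCLike 𝕜] [DecidableEq n]
    {A : Matrix n n 𝕜} (hA : A.PosSemidef) : hA.sqrt * hA.sqrt = A := by
  rw [hA.sqrt_eq_cfcSqrt]
  exact CFC.sqrt_mul_sqrt_self A (nonneg_iff_posSemidef.mpr hA)

open scoped MatrixOrder in
lemma Matrix.PosSemidef.eq_sqrt_of_sq_eq {n 𝕜 : Type*} [Fintype n] [RCLike 𝕜] [DecidableEq n]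
    {B : Matrix n n 𝕜} (hB : B.PosSemidef) {A : Matrix n n 𝕜} (hA : A.PosSemidef)
    (hBA : B ^ 2 = A) : B = hA.sqrt := by
  rw [hA.sqrt_eq_cfcSqrt]
  exact (CFC.sqrt_unique (by rw [← sq]; exact hBA) (nonneg_iff_posSemidef.mpr hB)).symm

/-- Gentle Measurement identity: F(ρ, ρ|A) = tr(ρA) for a projector A. -/
theorem fidelity_cond_self {d : ℕ} (ρ A : Matrix (Fin d) (Fin d) ℂ)
    (hρ : ρ.PosSemidef) (hρ1 : ρ.trace = 1)
    (hA : A.IsHermitian) (hA2 : A * A = A)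
    (hpos : 0 < ((ρ * A).trace).re)
    (hcond : (((ρ * A).trace)⁻¹ • (A * ρ * A)).PosSemidef) :
    traceNorm (hρ.sqrt * hcond.sqrt) ^ 2 = ((ρ * A).trace).re := by
  set t : ℂ := (ρ * A).trace with ht
  set r := hcond.sqrt with hr
  set s := hρ.sqrt with hs
  -- t is real
  have htstar : (starRingEnd ℂ) t = t := by
    have hct : (ρ * A)ᴴ = A * ρ := by rw [conjTranspose_mul, hρ.1, hA]
    calc (starRingEnd ℂ) t = (ρ * A)ᴴ.trace := by rw [trace_conjTranspose]; rfl
      _ = (A * ρ).trace := by rw [hct]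
      _ = t := by rw [trace_mul_comm]
  have htre : t = (t.re : ℂ) := (Complex.conj_eq_iff_re.mp htstar).symm
  have ht0 : t ≠ 0 := by
    rw [htre]; exact_mod_cast (ne_of_gt hpos)
  -- r is hermitian, r * r = σ
  have hrherm : rᴴ = r := hcond.posSemidef_sqrt.1
  have hrr : r * r = t⁻¹ • (A * ρ * A) := hcond.sqrt_mul_self
  -- A absorbs r
  have hrA : r * A = r := by
    have hP : r * (1 - A) = 0 := by
      rw [← conjTranspose_mul_self_eq_zero (A := r * (1 - A))]
      have h1 : (r * (1 - A))ᴴ = (1 - A) * r := by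
        rw [conjTranspose_mul, hrherm, conjTranspose_sub, conjTranspose_one, hA]
      rw [h1]
      have h3 : (1 - A) * (r * r) * (1 - A) = 0 := by
        rw [hrr, Matrix.mul_smul, Matrix.smul_mul]
        have hA1 : (1 - A) * (A * ρ * A) * (1 - A) = 0 := by
          have h4 : (1 - A) * A = 0 := by
            rw [Matrix.sub_mul, Matrix.one_mul, hA2, sub_self]
          have h2 : A * (1 - A) = 0 := by
            rw [Matrix.mul_sub, Matrix.mul_one, hA2, sub_self]
          calc (1 - A) * (A * ρ * A) * (1 - A)
              = ((1 - A) * A) * ρ * (A * (1 - A)) := by noncomm_ring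
            _ = 0 := by rw [h4, h2]; simp
        rw [hA1, smul_zero]
      calc (1 - A) * r * (r * (1 - A)) = (1 - A) * (r * r) * (1 - A) := by noncomm_ring
        _ = 0 := h3
    rw [Matrix.mul_sub, Matrix.mul_one, sub_eq_zero] at hP
    exact hP.symm
  have hAr : A * r = r := by
    have h := congrArg conjTranspose hrA
    rwa [conjTranspose_mul, hrherm, hA] at h
  -- key: (s*r)ᴴ * (s*r) = t • (r*r)^2
  have hss : s * s = ρ := hρ.sqrt_mul_self
  have hsherm : sᴴ = s := hρ.posSemidef_sqrt.1
  have key : (s * r)ᴴ * (s * r) = t • ((r * r) * (r * r)) := by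
    rw [conjTranspose_mul, hrherm, hsherm]
    calc r * s * (s * r) = r * (s * s) * r := by noncomm_ring
      _ = (r * A) * ρ * (A * r) := by rw [hss, hrA, hAr]
      _ = r * (A * ρ * A) * r := by noncomm_ring
      _ = r * (t • (t⁻¹ • (A * ρ * A))) * r := by
          rw [smul_smul, mul_inv_cancel₀ ht0, one_smul]
      _ = t • (r * (r * r) * r) := by rw [← hrr, Matrix.mul_smul, Matrix.smul_mul]
      _ = t • ((r * r) * (r * r)) := by noncomm_ring
  -- the sqrt of MᴴM
  set c : ℝ := Real.sqrt t.re with hc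
  have hc0 : 0 ≤ c := Real.sqrt_nonneg _
  have hcsq : (c : ℂ) * (c : ℂ) = t := by
    rw [← Complex.ofReal_mul, Real.mul_self_sqrt (le_of_lt hpos), ← htre]
  have hrrpsd : (r * r).PosSemidef := by
    have := Matrix.posSemidef_conjTranspose_mul_self r
    rwa [hrherm] at this
  have hpsd : ((c : ℂ) • (r * r)).PosSemidef := psd_smul_aux hrrpsd hc0
  have hsq : ((c : ℂ) • (r * r)) ^ 2 = (s * r)ᴴ * (s * r) := by
    rw [key, smul_pow, pow_two, ← hcsq, sq]
  have hsqrt : (c : ℂ) • (r * r) =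
      (Matrix.posSemidef_conjTranspose_mul_self (s * r)).sqrt :=
    hpsd.eq_sqrt_of_sq_eq _ hsq
  -- trace of σ is 1
  have htrσ : (r * r).trace = 1 := by
    rw [hrr, trace_smul]
    have : (A * ρ * A).trace = t := by
      rw [trace_mul_comm (A * ρ) A, ← Matrix.mul_assoc, hA2, trace_mul_comm]
    rw [this, smul_eq_mul, inv_mul_cancel₀ ht0]
  have : traceNorm (s * r) = c := by
    unfold traceNorm
    rw [← hsqrt, trace_smul, htrσ, smul_eq_mul, mul_one, Complex.ofReal_re]
  rw [this, hc, Real.sq_sqrt (le_of_lt hpos)]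
end

section
/- For density matrices ρ, σ ∈ ℂ^{d×d} and matrices M, N ∈ ℂ^{d×d} with tr(ρM†M) > 0 and tr(σN†N) > 0, the root fidelity of conditioned states satisfies √F(ρ|M, σ|N) = ‖√ρ M†N √σ‖₁ / (√tr(ρM†M) · √tr(σN†N)). -/
open Matrix ComplexOrder

namespace Matrix.PosSemidef

open scoped MatrixOrder

variable {n : Type*} [Fintype n] [DecidableEq n]

lemma sqrt_eq_cfcSqrt_s4 {A : Matrix n n ℂ} (hA : A.PosSemidef) : hA.sqrt = CFC.sqrt A := by
  rw [CFC.sqrt_eq_real_sqrt A hA.nonneg, cfcₙ_eq_cfc, hA.1.cfc_eq, IsHermitian.cfc,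
    Unitary.conjStarAlgAut_apply]
  rfl

lemma posSemidef_sqrt_s4 {A : Matrix n n ℂ} (hA : A.PosSemidef) : hA.sqrt.PosSemidef := by
  rw [sqrt_eq_cfcSqrt_s4]; exact (CFC.sqrt_nonneg A).posSemidef

lemma sqrt_mul_self_s4 {A : Matrix n n ℂ} (hA : A.PosSemidef) : hA.sqrt * hA.sqrt = A := by
  rw [sqrt_eq_cfcSqrt_s4]; exact CFC.sqrt_mul_sqrt_self A hA.nonneg

lemma eq_sqrt_of_sq_eq_s4 {A : Matrix n n ℂ} (hA : A.PosSemidef) {B : Matrix n n ℂ}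
    (hB : B.PosSemidef) (hAB : A ^ 2 = B) : A = hB.sqrt := by
  rw [sqrt_eq_cfcSqrt_s4]
  exact (CFC.sqrt_unique (by rw [← sq]; exact hAB) hA.nonneg).symm

end Matrix.PosSemidef

namespace RFaux

variable {n : Type*} [Fintype n] [DecidableEq n]

lemma sqrt_congr {A B : Matrix n n ℂ} (hA : A.PosSemidef) (hB : B.PosSemidef)
    (h : A = B) : hA.sqrt = hB.sqrt := by subst h; rfl

lemma trace_sqrt {P : Matrix n n ℂ} (hP : P.PosSemidef) :
    hP.sqrt.trace = ∑ i, (Real.sqrt (hP.1.eigenvalues i) : ℂ) := by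
  rw [Matrix.PosSemidef.sqrt, Matrix.trace_mul_cycle, Unitary.coe_star_mul_self,
    Matrix.one_mul, Matrix.trace_diagonal]
  rfl

lemma trace_sqrt_self_mul_conjTranspose (Z : Matrix n n ℂ) :
    (Matrix.posSemidef_self_mul_conjTranspose Z).sqrt.trace
      = ∑ i, (Real.sqrt ((Matrix.isHermitian_conjTranspose_mul_self Z).eigenvalues i) : ℂ) := by
  set h := Matrix.isHermitian_conjTranspose_mul_self Z with hh
  set U : Matrix n n ℂ := (h.eigenvectorUnitary : Matrix n n ℂ) with hU
  set dd := h.eigenvalues with hdd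
  have hd0 : ∀ i, 0 ≤ dd i := (Matrix.posSemidef_conjTranspose_mul_self Z).eigenvalues_nonneg
  set W := Z * U with hW
  have hUU : star U * U = 1 := Unitary.coe_star_mul_self _
  have hUU' : U * star U = 1 := Unitary.coe_mul_star_self _
  have hWW : Wᴴ * W = Matrix.diagonal (fun i => (dd i : ℂ)) := by
    have key := h.conjStarAlgAut_star_eigenvectorUnitary
    rw [Unitary.conjStarAlgAut_star_apply] at key
    calc Wᴴ * W = star U * (Zᴴ * Z) * U := by
          simp only [hW, Matrix.conjTranspose_mul, Matrix.star_eq_conjTranspose, Matrix.mul_assoc]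
      _ = Matrix.diagonal (fun i => (dd i : ℂ)) := by rw [key]; rfl
  have hcol : ∀ j, dd j = 0 → ∀ i, W i j = 0 := by
    intro j hj i
    have hjj : ∑ k, star (W k j) * W k j = 0 := by
      have := congrArg (fun A => A j j) hWW
      simp only [Matrix.mul_apply, Matrix.conjTranspose_apply, Matrix.diagonal_apply_eq, hj,
        Complex.ofReal_zero] at this
      exact this
    have hterm : star (W i j) * W i j = 0 := by
      have hnn : ∀ k ∈ Finset.univ, (0:ℂ) ≤ star (W k j) * W k j :=
        fun k _ => star_mul_self_nonneg _
      exact (Finset.sum_eq_zero_iff_of_nonneg hnn).mp hjj i (Finset.mem_univ i)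
    have hns : Complex.normSq (W i j) = 0 := by
      rw [Complex.star_def, mul_comm, Complex.mul_conj] at hterm
      exact_mod_cast hterm
    exact Complex.normSq_eq_zero.mp hns
  set g : n → ℝ := fun i => if dd i = 0 then 0 else (Real.sqrt (dd i))⁻¹ with hg
  have hg0 : ∀ i, 0 ≤ g i := by
    intro i; by_cases hi : dd i = 0 <;> simp [hg, hi, Real.sqrt_nonneg]
  set G : Matrix n n ℂ := Matrix.diagonal (fun i => (g i : ℂ)) with hG
  set S := W * G * Wᴴ with hS
  have hGfac : G = Matrix.diagonal (fun i => (Real.sqrt (g i) : ℂ)) *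
      (Matrix.diagonal (fun i => (Real.sqrt (g i) : ℂ)))ᴴ := by
    rw [hG, Matrix.diagonal_conjTranspose, Matrix.diagonal_mul_diagonal]
    exact congrArg Matrix.diagonal (funext fun i => by
      simp only [Pi.star_apply, Complex.star_def, Complex.conj_ofReal]
      rw [← Complex.ofReal_mul, Real.mul_self_sqrt (hg0 i)])
  have hSpsd : S.PosSemidef := by
    have : S = (W * Matrix.diagonal (fun i => (Real.sqrt (g i) : ℂ))) *
        (W * Matrix.diagonal (fun i => (Real.sqrt (g i) : ℂ)))ᴴ := by
      rw [Matrix.conjTranspose_mul, hS, hGfac]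
      simp only [Matrix.mul_assoc]
    rw [this]
    exact Matrix.posSemidef_self_mul_conjTranspose _
  have hWP : W * Matrix.diagonal (fun i => ((g i : ℂ) * dd i * g i)) = W := by
    ext i j
    rw [Matrix.mul_diagonal]
    by_cases hj : dd j = 0
    · simp [hcol j hj i]
    · have hsd : Real.sqrt (dd j) ≠ 0 :=
        Real.sqrt_ne_zero'.mpr (lt_of_le_of_ne (hd0 j) (Ne.symm hj))
      have hr : g j * dd j * g j = 1 := by
        simp only [hg, if_neg hj]
        field_simp
        all_goals linarith [Real.mul_self_sqrt (hd0 j)]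
      have : (g j : ℂ) * dd j * g j = 1 := by
        calc (g j : ℂ) * dd j * g j = ((g j * dd j * g j : ℝ) : ℂ) := by push_cast; ring
          _ = 1 := by rw [hr]; norm_num
      rw [this, mul_one]
  have hS2 : S ^ 2 = Z * Zᴴ := by
    have e2 : G * (Wᴴ * W) * G = Matrix.diagonal (fun i => (g i : ℂ) * dd i * g i) := by
      rw [hWW, hG, Matrix.diagonal_mul_diagonal, Matrix.diagonal_mul_diagonal]
    calc S ^ 2 = W * (G * (Wᴴ * W) * G) * Wᴴ := by
          rw [sq, hS]; simp only [Matrix.mul_assoc]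
      _ = W * Matrix.diagonal (fun i => (g i : ℂ) * dd i * g i) * Wᴴ := by rw [e2]
      _ = W * Wᴴ := by rw [hWP]
      _ = Z * Zᴴ := by
          rw [hW, Matrix.conjTranspose_mul, ← Matrix.star_eq_conjTranspose U]
          calc Z * U * (star U * Zᴴ) = Z * (U * star U) * Zᴴ := by
                simp only [Matrix.mul_assoc]
            _ = Z * Zᴴ := by rw [hUU', Matrix.mul_one]
  have hSeq : S = (Matrix.posSemidef_self_mul_conjTranspose Z).sqrt :=
    hSpsd.eq_sqrt_of_sq_eq_s4 _ hS2
  rw [← hSeq, hS, Matrix.trace_mul_cycle, hWW, hG]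
  rw [Matrix.diagonal_mul_diagonal, Matrix.trace_diagonal]
  refine Finset.sum_congr rfl fun i _ => ?_
  by_cases hi : dd i = 0
  · simp [hg, hi]
  · have hsd : Real.sqrt (dd i) ≠ 0 :=
      Real.sqrt_ne_zero'.mpr (lt_of_le_of_ne (hd0 i) (Ne.symm hi))
    have hr : dd i * g i = Real.sqrt (dd i) := by
      simp only [hg, if_neg hi]
      field_simp
      all_goals linarith [Real.mul_self_sqrt (hd0 i)]
    calc (dd i : ℂ) * g i = ((dd i * g i : ℝ) : ℂ) := by push_cast; ring
      _ = _ := by rw [hr]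


lemma traceNorm_conjTranspose (Z : Matrix n n ℂ) : traceNorm Zᴴ = traceNorm Z := by
  unfold traceNorm
  rw [sqrt_congr (Matrix.posSemidef_conjTranspose_mul_self Zᴴ)
      (Matrix.posSemidef_self_mul_conjTranspose Z) (by rw [Matrix.conjTranspose_conjTranspose]),
    trace_sqrt_self_mul_conjTranspose, trace_sqrt (Matrix.posSemidef_conjTranspose_mul_self Z)]

lemma traceNorm_eq_of_gram_eq {Z₁ Z₂ : Matrix n n ℂ} (h : Z₁ᴴ * Z₁ = Z₂ᴴ * Z₂) :
    traceNorm Z₁ = traceNorm Z₂ := by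
  unfold traceNorm
  rw [sqrt_congr (Matrix.posSemidef_conjTranspose_mul_self Z₁)
    (Matrix.posSemidef_conjTranspose_mul_self Z₂) h]

lemma traceNorm_smul (c : ℝ) (hc : 0 ≤ c) (Z : Matrix n n ℂ) :
    traceNorm ((c : ℂ) • Z) = c * traceNorm Z := by
  have hP := Matrix.posSemidef_conjTranspose_mul_self Z
  have hgram : ((c:ℂ) • Z)ᴴ * ((c:ℂ) • Z) = ((c*c : ℝ) : ℂ) • (Zᴴ * Z) := by
    rw [Matrix.conjTranspose_smul]
    simp only [Matrix.smul_mul, Matrix.mul_smul, smul_smul]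
    congr 1
    rw [Complex.star_def, Complex.conj_ofReal]
    push_cast; ring
  have hB := hP.posSemidef_sqrt_s4
  have hQ : hB.sqrt * hB.sqrt = hP.sqrt := hB.sqrt_mul_self_s4
  have hcand : ((c:ℂ) • hP.sqrt).PosSemidef := by
    have e : (c:ℂ) • hP.sqrt
        = ((Real.sqrt c : ℂ) • hB.sqrt)ᴴ * ((Real.sqrt c : ℂ) • hB.sqrt) := by
      rw [Matrix.conjTranspose_smul, hB.posSemidef_sqrt_s4.1]
      simp only [Matrix.smul_mul, Matrix.mul_smul, smul_smul, hQ]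
      congr 1
      rw [Complex.star_def, Complex.conj_ofReal, ← Complex.ofReal_mul, Real.mul_self_sqrt hc]
    rw [e]; exact Matrix.posSemidef_conjTranspose_mul_self _
  have hsq : ((c:ℂ) • hP.sqrt) ^ 2 = ((c:ℂ) • Z)ᴴ * ((c:ℂ) • Z) := by
    rw [hgram, sq]
    simp only [Matrix.smul_mul, Matrix.mul_smul, smul_smul, hP.sqrt_mul_self_s4]
    congr 1
    push_cast; ring
  have heq := hcand.eq_sqrt_of_sq_eq_s4 (Matrix.posSemidef_conjTranspose_mul_self ((c:ℂ) • Z)) hsq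
  unfold traceNorm
  rw [← heq, Matrix.trace_smul]
  simp [Complex.mul_re]

end RFaux

/-- Root fidelity of conditioned states:
√F(ρ|M, σ|N) = ‖√ρ MᴴN √σ‖₁ / (√tr(ρMᴴM)·√tr(σNᴴN)). -/
theorem rootFidelity_cond_cond {d : ℕ} (ρ σ M N : Matrix (Fin d) (Fin d) ℂ)
    (hρ : ρ.PosSemidef) (hρ1 : ρ.trace = 1)
    (hσ : σ.PosSemidef) (hσ1 : σ.trace = 1)
    (hM : 0 < ((ρ * (Mᴴ * M)).trace).re)
    (hN : 0 < ((σ * (Nᴴ * N)).trace).re)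
    (hρM : (((ρ * (Mᴴ * M)).trace)⁻¹ • (M * ρ * Mᴴ)).PosSemidef)
    (hσN : (((σ * (Nᴴ * N)).trace)⁻¹ • (N * σ * Nᴴ)).PosSemidef) :
    traceNorm (hρM.sqrt * hσN.sqrt) =
      traceNorm (hρ.sqrt * (Mᴴ * N) * hσ.sqrt) /
        (Real.sqrt (((ρ * (Mᴴ * M)).trace).re) * Real.sqrt (((σ * (Nᴴ * N)).trace).re)) := by
  
  have htr : ∀ (τ K : Matrix (Fin d) (Fin d) ℂ) (hτ : τ.PosSemidef),
      (τ * (Kᴴ * K)).trace = ((K * hτ.sqrt)ᴴ * (K * hτ.sqrt)).trace := by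
    intro τ K hτ
    calc (τ * (Kᴴ * K)).trace = (hτ.sqrt * hτ.sqrt * (Kᴴ * K)).trace := by
          rw [hτ.sqrt_mul_self_s4]
      _ = (hτ.sqrt * (Kᴴ * K) * hτ.sqrt).trace :=
          (Matrix.trace_mul_cycle hτ.sqrt (Kᴴ * K) hτ.sqrt).symm
      _ = ((K * hτ.sqrt)ᴴ * (K * hτ.sqrt)).trace := by
          rw [Matrix.conjTranspose_mul, hτ.posSemidef_sqrt_s4.1]
          simp only [Matrix.mul_assoc]
  have treal : ∀ X : Matrix (Fin d) (Fin d) ℂ,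
      ((Xᴴ * X).trace) = ((((Xᴴ * X).trace).re : ℝ) : ℂ) := by
    intro X
    have h1 : (starRingEnd ℂ) ((Xᴴ * X).trace) = (Xᴴ * X).trace := by
      rw [← Complex.star_def, ← Matrix.trace_conjTranspose,
        (Matrix.posSemidef_conjTranspose_mul_self X).1]
    exact (Complex.conj_eq_iff_re.mp h1).symm
  have e1 : ((ρ * (Mᴴ * M)).trace) = ((M * hρ.sqrt)ᴴ * (M * hρ.sqrt)).trace := htr ρ M hρ
  have e1' : ((σ * (Nᴴ * N)).trace) = ((N * hσ.sqrt)ᴴ * (N * hσ.sqrt)).trace := htr σ N hσ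
  have htR : ((ρ * (Mᴴ * M)).trace) = ((((ρ * (Mᴴ * M)).trace).re : ℝ) : ℂ) := by rw [e1]; exact treal _
  have hsR : ((σ * (Nᴴ * N)).trace) = ((((σ * (Nᴴ * N)).trace).re : ℝ) : ℂ) := by rw [e1']; exact treal _
  have ha : 0 < Real.sqrt (((ρ * (Mᴴ * M)).trace).re) := Real.sqrt_pos.mpr hM
  have hb : 0 < Real.sqrt (((σ * (Nᴴ * N)).trace).re) := Real.sqrt_pos.mpr hN
  set X := (((Real.sqrt (((ρ * (Mᴴ * M)).trace).re))⁻¹ : ℝ) : ℂ) • (M * hρ.sqrt) with hXdef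
  set Y := (((Real.sqrt (((σ * (Nᴴ * N)).trace).re))⁻¹ : ℝ) : ℂ) • (N * hσ.sqrt) with hYdef
  have hXA : X * Xᴴ = ((ρ * (Mᴴ * M)).trace)⁻¹ • (M * ρ * Mᴴ) := by
    have hmat : (M * hρ.sqrt) * (M * hρ.sqrt)ᴴ = M * ρ * Mᴴ := by
      rw [Matrix.conjTranspose_mul, hρ.posSemidef_sqrt_s4.1]
      calc M * hρ.sqrt * (hρ.sqrt * Mᴴ) = M * (hρ.sqrt * hρ.sqrt) * Mᴴ := by
            simp only [Matrix.mul_assoc]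
        _ = M * ρ * Mᴴ := by rw [hρ.sqrt_mul_self_s4]
    rw [hXdef, Matrix.conjTranspose_smul, Matrix.smul_mul, Matrix.mul_smul, smul_smul, hmat]
    congr 1
    rw [Complex.star_def, Complex.conj_ofReal, htR, ← Complex.ofReal_inv, ← Complex.ofReal_mul]
    congr 1
    rw [← mul_inv]
    congr 1
    exact Real.mul_self_sqrt hM.le
  have hYB : Y * Yᴴ = ((σ * (Nᴴ * N)).trace)⁻¹ • (N * σ * Nᴴ) := by
    have hmat : (N * hσ.sqrt) * (N * hσ.sqrt)ᴴ = N * σ * Nᴴ := by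
      rw [Matrix.conjTranspose_mul, hσ.posSemidef_sqrt_s4.1]
      calc N * hσ.sqrt * (hσ.sqrt * Nᴴ) = N * (hσ.sqrt * hσ.sqrt) * Nᴴ := by
            simp only [Matrix.mul_assoc]
        _ = N * σ * Nᴴ := by rw [hσ.sqrt_mul_self_s4]
    rw [hYdef, Matrix.conjTranspose_smul, Matrix.smul_mul, Matrix.mul_smul, smul_smul, hmat]
    congr 1
    rw [Complex.star_def, Complex.conj_ofReal, hsR, ← Complex.ofReal_inv, ← Complex.ofReal_mul]
    congr 1
    rw [← mul_inv]
    congr 1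
    exact Real.mul_self_sqrt hN.le
  have e2 : (hσN.sqrt * hρM.sqrt)ᴴ = hρM.sqrt * hσN.sqrt := by
    rw [Matrix.conjTranspose_mul, hρM.posSemidef_sqrt_s4.1, hσN.posSemidef_sqrt_s4.1]
  have step1 : traceNorm (hρM.sqrt * hσN.sqrt) = traceNorm (hσN.sqrt * hρM.sqrt) := by
    rw [← e2, RFaux.traceNorm_conjTranspose]
  have g1 : (hσN.sqrt * hρM.sqrt)ᴴ * (hσN.sqrt * hρM.sqrt)
      = (Yᴴ * hρM.sqrt)ᴴ * (Yᴴ * hρM.sqrt) := by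
    rw [Matrix.conjTranspose_mul, Matrix.conjTranspose_mul, hρM.posSemidef_sqrt_s4.1,
      hσN.posSemidef_sqrt_s4.1, Matrix.conjTranspose_conjTranspose]
    calc hρM.sqrt * hσN.sqrt * (hσN.sqrt * hρM.sqrt)
        = hρM.sqrt * (hσN.sqrt * hσN.sqrt) * hρM.sqrt := by
          simp only [Matrix.mul_assoc]
      _ = hρM.sqrt * (Y * Yᴴ) * hρM.sqrt := by rw [hσN.sqrt_mul_self_s4, ← hYB]
      _ = hρM.sqrt * Y * (Yᴴ * hρM.sqrt) := by simp only [Matrix.mul_assoc]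
  have step2 : traceNorm (hσN.sqrt * hρM.sqrt) = traceNorm (Yᴴ * hρM.sqrt) :=
    RFaux.traceNorm_eq_of_gram_eq g1
  have e3 : (hρM.sqrt * Y)ᴴ = Yᴴ * hρM.sqrt := by
    rw [Matrix.conjTranspose_mul, hρM.posSemidef_sqrt_s4.1]
  have step3 : traceNorm (Yᴴ * hρM.sqrt) = traceNorm (hρM.sqrt * Y) := by
    rw [← e3, RFaux.traceNorm_conjTranspose]
  have g2 : (hρM.sqrt * Y)ᴴ * (hρM.sqrt * Y) = (Xᴴ * Y)ᴴ * (Xᴴ * Y) := by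
    rw [Matrix.conjTranspose_mul, Matrix.conjTranspose_mul, hρM.posSemidef_sqrt_s4.1,
      Matrix.conjTranspose_conjTranspose]
    calc Yᴴ * hρM.sqrt * (hρM.sqrt * Y) = Yᴴ * (hρM.sqrt * hρM.sqrt) * Y := by
          simp only [Matrix.mul_assoc]
      _ = Yᴴ * (X * Xᴴ) * Y := by rw [hρM.sqrt_mul_self_s4, ← hXA]
      _ = Yᴴ * X * (Xᴴ * Y) := by simp only [Matrix.mul_assoc]
  have step4 : traceNorm (hρM.sqrt * Y) = traceNorm (Xᴴ * Y) :=
    RFaux.traceNorm_eq_of_gram_eq g2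
  have e5 : Xᴴ * Y = ((((Real.sqrt (((ρ * (Mᴴ * M)).trace).re))⁻¹ * (Real.sqrt (((σ * (Nᴴ * N)).trace).re))⁻¹ : ℝ)) : ℂ) •
      (hρ.sqrt * (Mᴴ * N) * hσ.sqrt) := by
    rw [hXdef, hYdef]
    rw [Matrix.conjTranspose_smul]
    rw [Matrix.conjTranspose_mul]
    rw [hρ.posSemidef_sqrt_s4.1]
    rw [Matrix.smul_mul]
    rw [Matrix.mul_smul]
    rw [smul_smul]
    rw [Complex.star_def, Complex.conj_ofReal, ← Complex.ofReal_mul,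
      ← Matrix.mul_assoc _ N hσ.sqrt, Matrix.mul_assoc hρ.sqrt Mᴴ N]
  have hnn : (0:ℝ) ≤ (Real.sqrt (((ρ * (Mᴴ * M)).trace).re))⁻¹ *
      (Real.sqrt (((σ * (Nᴴ * N)).trace).re))⁻¹ := by positivity
  rw [step1, step2, step3, step4, e5, RFaux.traceNorm_smul _ hnn _,
    div_eq_inv_mul, mul_inv]
end
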